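/- Let d ≥ 1, let B^d be the closed Euclidean unit ball in ℝ^d, and let ν_d be the uniform probability measure on B^d. For every Borel set B ⊆ B^d with ν_d(B) ≥ 1/2 and every ε ∈ (0, 2], the open Euclidean ε-neighborhood B_ε satisfies ν_d(B_ε) ≥ 1 − (1/ν_d(B)) · e^{−2d·((2−√3)/3)·ε²}. -/

import Mathlib

open MeasureTheory Real
open scoped ENNReal

open Set Metric
open scoped NNReal

lemma four_mul_le_sq (a b : ℝ≥0∞) : 4 * (a * b) ≤ (a + b) ^ 2 := by
  rcases eq_or_ne a 0 with rfl | ha0; · simp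
  rcases eq_or_ne b 0 with rfl | hb0; · simp
  rcases eq_or_ne a ⊤ with rfl | ha
  · rw [show ((⊤ : ℝ≥0∞) + b) ^ 2 = ⊤ by simp]; exact le_top
  rcases eq_or_ne b ⊤ with rfl | hb
  · rw [show (a + (⊤ : ℝ≥0∞)) ^ 2 = ⊤ by simp]; exact le_top
  lift a to ℝ≥0 using ha
  lift b to ℝ≥0 using hb
  rw [← ENNReal.coe_ofNat, ← ENNReal.coe_mul, ← ENNReal.coe_mul, ← ENNReal.coe_add,
    ← ENNReal.coe_pow, ENNReal.coe_le_coe, ← NNReal.coe_le_coe]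
  push_cast
  nlinarith [NNReal.coe_nonneg a, NNReal.coe_nonneg b, sq_nonneg ((a : ℝ) - b)]

lemma vol_half_preimage (K : Set ℝ) (b : ℝ) :
    volume ((fun y : ℝ => 2 * y - b) ⁻¹' K) = 2⁻¹ * volume K := by
  have h1 : (fun y : ℝ => 2 * y - b) = (fun z : ℝ => z - b) ∘ (fun y : ℝ => 2 * y) := rfl
  rw [h1, preimage_comp, Real.volume_preimage_mul_left (two_ne_zero)]
  have h2 : volume ((fun z : ℝ => z - b) ⁻¹' K) = volume K := by
    have : (fun z : ℝ => z - b) ⁻¹' K = (fun z : ℝ => z + (-b)) ⁻¹' K := by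
      simp [sub_eq_add_neg]
    rw [this, measure_preimage_add_right]
  rw [h2]
  have h3 : |(2:ℝ)⁻¹| = (2:ℝ)⁻¹ := by norm_num
  rw [h3, ENNReal.ofReal_inv_of_pos two_pos, ENNReal.ofReal_ofNat]

lemma mid_vol_1d {A B S : Set ℝ} (hS : MeasurableSet S)
    (hAne : A.Nonempty) (hBne : B.Nonempty) (hAm : MeasurableSet A) (hBm : MeasurableSet B)
    (hmid : ∀ a ∈ A, ∀ b ∈ B, (a + b) / 2 ∈ S) :
    volume A + volume B ≤ 2 * volume S := by
  obtain ⟨a₀, ha₀⟩ := hAne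
  obtain ⟨b₀, hb₀⟩ := hBne
  have core : ∀ K L : Set ℝ, IsCompact K → IsCompact L → K ⊆ A → L ⊆ B →
      volume K + volume L ≤ 2 * volume S := by
    intro K L hK hL hKA hLB
    set K' := insert a₀ K with hK'def
    set L' := insert b₀ L with hL'def
    have hK'c : IsCompact K' := hK.insert a₀
    have hL'c : IsCompact L' := hL.insert b₀
    have hK'A : K' ⊆ A := insert_subset ha₀ hKA
    have hL'B : L' ⊆ B := insert_subset hb₀ hLB
    set a := sSup K' with hadef
    set b := sInf L' with hbdef
    have haK : a ∈ K' := hK'c.sSup_mem ⟨a₀, mem_insert _ _⟩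
    have hbL : b ∈ L' := hL'c.sInf_mem ⟨b₀, mem_insert _ _⟩
    set P := (fun y : ℝ => 2 * y - b) ⁻¹' K' with hPdef
    set Q := (fun y : ℝ => 2 * y - a) ⁻¹' L' with hQdef
    have hPS : P ⊆ S := by
      intro y hy
      have h2 : (2 * y - b + b) / 2 ∈ S := hmid _ (hK'A hy) _ (hL'B hbL)
      have : (2 * y - b + b) / 2 = y := by ring
      rwa [this] at h2
    have hQS : Q ⊆ S := by
      intro y hy
      have h2 : (a + (2 * y - a)) / 2 ∈ S := hmid _ (hK'A haK) _ (hL'B hy)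
      have : (a + (2 * y - a)) / 2 = y := by ring
      rwa [this] at h2
    have hPle : P ⊆ Iic ((a + b) / 2) := by
      intro y hy
      have : 2 * y - b ≤ a := le_csSup hK'c.bddAbove hy
      simp only [mem_Iic]; linarith
    have hQge : Q ⊆ Ici ((a + b) / 2) := by
      intro y hy
      have : b ≤ 2 * y - a := csInf_le hL'c.bddBelow hy
      simp only [mem_Ici]; linarith
    have hPQ : P ∩ Q ⊆ {(a + b) / 2} := by
      intro y hy
      have h1 := hPle hy.1
      have h2 := hQge hy.2
      simp only [mem_Iic] at h1; simp only [mem_Ici] at h2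
      simp [le_antisymm h1 h2]
    have hQm : MeasurableSet Q := hL'c.measurableSet.preimage (by fun_prop)
    have hvolP : volume P = 2⁻¹ * volume K' := vol_half_preimage K' b
    have hvolQ : volume Q = 2⁻¹ * volume L' := vol_half_preimage L' a
    calc volume K + volume L ≤ volume K' + volume L' :=
          add_le_add (measure_mono (subset_insert _ _)) (measure_mono (subset_insert _ _))
      _ = 2 * volume P + 2 * volume Q := by
          rw [hvolP, hvolQ, ← mul_assoc, ← mul_assoc, ENNReal.mul_inv_cancel (by norm_num) (by norm_num), one_mul, one_mul]
      _ = 2 * (volume P + volume Q) := by ring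
      _ = 2 * (volume (P ∪ Q) + volume (P ∩ Q)) := by rw [measure_union_add_inter P hQm]
      _ ≤ 2 * (volume S + 0) := by
          have h1 : volume (P ∪ Q) ≤ volume S := measure_mono (union_subset hPS hQS)
          have h2 : volume (P ∩ Q) ≤ 0 := le_of_eq (measure_mono_null hPQ (measure_singleton _))
          exact mul_le_mul_right (add_le_add h1 h2) 2
      _ = 2 * volume S := by rw [add_zero]
  -- now pass from compacts to A, B
  have hAsup := hAm.measure_eq_iSup_isCompact (MeasureTheory.volume : Measure ℝ)
  have hBsup := hBm.measure_eq_iSup_isCompact (MeasureTheory.volume : Measure ℝ)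
  have hA' : volume A ≤ ⨆ p : {K : Set ℝ // K ⊆ A ∧ IsCompact K}, volume (p : Set ℝ) := by
    rw [hAsup]
    exact iSup_le fun K => iSup_le fun h1 => iSup_le fun h2 => le_iSup_of_le ⟨K, h1, h2⟩ le_rfl
  have hB' : volume B ≤ ⨆ p : {K : Set ℝ // K ⊆ B ∧ IsCompact K}, volume (p : Set ℝ) := by
    rw [hBsup]
    exact iSup_le fun K => iSup_le fun h1 => iSup_le fun h2 => le_iSup_of_le ⟨K, h1, h2⟩ le_rfl
  refine le_trans (add_le_add hA' hB') ?_
  haveI : Nonempty {K : Set ℝ // K ⊆ A ∧ IsCompact K} := ⟨⟨∅, empty_subset _, isCompact_empty⟩⟩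
  haveI : Nonempty {K : Set ℝ // K ⊆ B ∧ IsCompact K} := ⟨⟨∅, empty_subset _, isCompact_empty⟩⟩
  rw [ENNReal.iSup_add]
  refine iSup_le fun p => ?_
  rw [ENNReal.add_iSup]
  exact iSup_le fun q => core _ _ p.2.2 q.2.2 p.2.1 q.2.1

section part2
variable {f g h : ℝ → ℝ≥0∞}

lemma lintegral_eq_layer (hf : Measurable f) (hfin : ∀ x, f x ≠ ⊤) :
    ∫⁻ x, f x = ∫⁻ t in Ioi (0:ℝ), volume {x | ENNReal.ofReal t < f x} := by
  calc ∫⁻ x, f x = ∫⁻ x, ENNReal.ofReal ((f x).toReal) := by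
        congr 1; funext x; rw [ENNReal.ofReal_toReal (hfin x)]
    _ = ∫⁻ t in Ioi (0:ℝ), volume {a | t < (f a).toReal} :=
        lintegral_eq_lintegral_meas_lt _ (Filter.Eventually.of_forall fun x => ENNReal.toReal_nonneg)
          hf.ennreal_toReal.aemeasurable
    _ = ∫⁻ t in Ioi (0:ℝ), volume {a | ENNReal.ofReal t < f a} := by
        apply setLIntegral_congr_fun measurableSet_Ioi
        refine fun t ht => ?_
        beta_reduce
        congr 1
        ext a
        exact (ENNReal.ofReal_lt_iff_lt_toReal (le_of_lt ht) (hfin a)).symm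

lemma cov_Ioi (c : ℝ) (hc : 0 < c) (φ : ℝ → ℝ≥0∞) (hφ : Measurable φ) :
    ∫⁻ t in Ioi (0:ℝ), φ t = ENNReal.ofReal c * ∫⁻ τ in Ioi (0:ℝ), φ (c * τ) := by
  have hmeas : Measurable fun y : ℝ => c * y := by fun_prop
  have hpre : (fun y : ℝ => c * y) ⁻¹' (Ioi 0) = Ioi 0 := by
    ext y
    simp only [mem_preimage, mem_Ioi]
    constructor
    · intro h'; nlinarith
    · intro h'; positivity
  have hmap : Measure.map (fun y : ℝ => c * y) (volume.restrict (Ioi 0)) =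
      ENNReal.ofReal c⁻¹ • volume.restrict (Ioi 0) := by
    conv_lhs => rw [← hpre]
    rw [← Measure.restrict_map hmeas measurableSet_Ioi, Real.map_volume_mul_left (ne_of_gt hc),
      abs_of_pos (inv_pos.mpr hc), Measure.restrict_smul]
  have h1 : ∫⁻ τ in Ioi (0:ℝ), φ (c * τ) = ENNReal.ofReal c⁻¹ * ∫⁻ t in Ioi (0:ℝ), φ t := by
    rw [← smul_eq_mul, ← lintegral_smul_measure, ← hmap, lintegral_map hφ hmeas]
  rw [h1, ← mul_assoc, ENNReal.ofReal_inv_of_pos hc,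
    ENNReal.mul_inv_cancel (by simp [hc]) ENNReal.ofReal_ne_top, one_mul]

lemma ennreal_sup_min_nat (a : ℝ≥0∞) : (⨆ N : ℕ, min a (N : ℝ≥0∞)) = a := by
  apply le_antisymm (iSup_le fun N => min_le_left _ _)
  rcases eq_or_ne a ⊤ with rfl | ha
  · have : ∀ N : ℕ, min (⊤:ℝ≥0∞) (N:ℝ≥0∞) = (N:ℝ≥0∞) := fun N => min_eq_right le_top
    simp only [this]
    rw [ENNReal.iSup_natCast]
  · obtain ⟨N, hN⟩ := ENNReal.exists_nat_gt ha
    exact le_iSup_of_le N (by rw [min_eq_left hN.le])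

lemma pl_dim_one_bdd (hf : Measurable f) (hg : Measurable g) (hh : Measurable h)
    (Nf Ng : ℝ≥0) (hfb : ∀ x, f x ≤ (Nf : ℝ≥0∞)) (hgb : ∀ x, g x ≤ (Ng : ℝ≥0∞))
    (H : ∀ x y, f x * g y ≤ (h ((x + y) / 2)) ^ 2) :
    (∫⁻ x, f x) * ∫⁻ y, g y ≤ (∫⁻ z, h z) ^ 2 := by
  rcases eq_or_ne (∫⁻ x, f x) 0 with hf0 | hf0
  · rw [hf0, zero_mul]; exact zero_le
  rcases eq_or_ne (∫⁻ y, g y) 0 with hg0 | hg0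
  · rw [hg0, mul_zero]; exact zero_le
  set Sf := ⨆ x, f x with hSf
  set Sg := ⨆ x, g x with hSg
  have hSf_top : Sf ≠ ⊤ := ne_top_of_le_ne_top ENNReal.coe_ne_top (iSup_le hfb)
  have hSg_top : Sg ≠ ⊤ := ne_top_of_le_ne_top ENNReal.coe_ne_top (iSup_le hgb)
  have hSf0 : Sf ≠ 0 := by
    intro h0
    apply hf0
    have : ∀ x, f x = 0 := fun x => le_antisymm (h0 ▸ le_iSup f x) zero_le
    simp [this]
  have hSg0 : Sg ≠ 0 := by
    intro h0
    apply hg0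
    have : ∀ x, g x = 0 := fun x => le_antisymm (h0 ▸ le_iSup g x) zero_le
    simp [this]
  set sf := Sf.toReal with hsfdef
  set sg := Sg.toReal with hsgdef
  have hsf : 0 < sf := ENNReal.toReal_pos hSf0 hSf_top
  have hsg : 0 < sg := ENNReal.toReal_pos hSg0 hSg_top
  have hOf : ENNReal.ofReal sf = Sf := ENNReal.ofReal_toReal hSf_top
  have hOg : ENNReal.ofReal sg = Sg := ENNReal.ofReal_toReal hSg_top
  set sh := Real.sqrt (sf * sg) with hshdef
  have hsh : 0 < sh := Real.sqrt_pos.mpr (by positivity)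
  have hsh2 : sh * sh = sf * sg := Real.mul_self_sqrt (by positivity)
  have hfin_f : ∀ x, f x ≠ ⊤ := fun x => ne_top_of_le_ne_top hSf_top (le_iSup f x)
  have hfin_g : ∀ x, g x ≠ ⊤ := fun x => ne_top_of_le_ne_top hSg_top (le_iSup g x)
  set φf := fun t : ℝ => volume {x | ENNReal.ofReal t < f x} with hφfdef
  set φg := fun t : ℝ => volume {x | ENNReal.ofReal t < g x} with hφgdef
  set φh := fun t : ℝ => volume {x | ENNReal.ofReal t < h x} with hφhdef
  have hφf_anti : Antitone φf := fun t s hts =>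
    measure_mono fun x hx => lt_of_le_of_lt (ENNReal.ofReal_le_ofReal hts) hx
  have hφg_anti : Antitone φg := fun t s hts =>
    measure_mono fun x hx => lt_of_le_of_lt (ENNReal.ofReal_le_ofReal hts) hx
  have hφh_anti : Antitone φh := fun t s hts =>
    measure_mono fun x hx => lt_of_le_of_lt (ENNReal.ofReal_le_ofReal hts) hx
  have hφf : Measurable φf := hφf_anti.measurable
  have hφg : Measurable φg := hφg_anti.measurable
  have hφh : Measurable φh := hφh_anti.measurable
  -- split Ioi 0 into Ioo 0 1 and Ici 1
  have hIoi : Ioi (0:ℝ) = Ioo 0 1 ∪ Ici 1 := by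
    ext x
    simp only [mem_Ioi, mem_union, mem_Ioo, mem_Ici]
    constructor
    · intro hx
      by_cases h1 : x < 1
      · exact Or.inl ⟨hx, h1⟩
      · exact Or.inr (le_of_not_gt h1)
    · rintro (⟨h1, _⟩ | h1) <;> linarith
  have hdisj : Disjoint (Ioo (0:ℝ) 1) (Ici 1) :=
    Set.disjoint_left.mpr fun x hx hx' => absurd hx.2 (not_lt.mpr hx')
  -- general splitting fact
  have split : ∀ (c : ℝ) (φ : ℝ → ℝ≥0∞), 0 < c → Measurable φ →
      (∀ τ : ℝ, 1 ≤ τ → φ (c * τ) = 0) →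
      ∫⁻ τ in Ioi (0:ℝ), φ (c * τ) = ∫⁻ τ in Ioo (0:ℝ) 1, φ (c * τ) := by
    intro c φ hc hφm hvan
    rw [hIoi, lintegral_union measurableSet_Ici hdisj]
    have : ∫⁻ τ in Ici (1:ℝ), φ (c * τ) = 0 := by
      rw [setLIntegral_congr_fun measurableSet_Ici
        (fun τ hτ => hvan τ hτ)]
      simp
    rw [this, add_zero]
  have hvanf : ∀ τ : ℝ, 1 ≤ τ → φf (sf * τ) = 0 := by
    intro τ hτ
    have hempty : {x | ENNReal.ofReal (sf * τ) < f x} = ∅ := by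
      apply eq_empty_iff_forall_notMem.mpr
      intro x hx
      have h1 : f x ≤ ENNReal.ofReal (sf * τ) := by
        exact le_trans (le_iSup f x) (le_trans hOf.ge (ENNReal.ofReal_le_ofReal (by nlinarith)))
      exact absurd hx (not_lt.mpr h1)
    simp only [hφfdef, hempty, measure_empty]
  have hvang : ∀ τ : ℝ, 1 ≤ τ → φg (sg * τ) = 0 := by
    intro τ hτ
    have hempty : {x | ENNReal.ofReal (sg * τ) < g x} = ∅ := by
      apply eq_empty_iff_forall_notMem.mpr
      intro x hx
      have h1 : g x ≤ ENNReal.ofReal (sg * τ) := by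
        exact le_trans (le_iSup g x) (le_trans hOg.ge (ENNReal.ofReal_le_ofReal (by nlinarith)))
      exact absurd hx (not_lt.mpr h1)
    simp only [hφgdef, hempty, measure_empty]
  set af := ∫⁻ τ in Ioo (0:ℝ) 1, φf (sf * τ) with hafdef
  set ag := ∫⁻ τ in Ioo (0:ℝ) 1, φg (sg * τ) with hagdef
  set ah := ∫⁻ τ in Ioo (0:ℝ) 1, φh (sh * τ) with hahdef
  have hf_eq : ∫⁻ x, f x = ENNReal.ofReal sf * af := by
    rw [lintegral_eq_layer hf hfin_f, cov_Ioi sf hsf φf hφf, split sf φf hsf hφf hvanf]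
  have hg_eq : ∫⁻ y, g y = ENNReal.ofReal sg * ag := by
    rw [lintegral_eq_layer hg hfin_g, cov_Ioi sg hsg φg hφg, split sg φg hsg hφg hvang]
  -- lower bound for ∫ h
  have hh_ge : ENNReal.ofReal sh * ah ≤ ∫⁻ z, h z := by
    set h' := fun z => min (h z) (ENNReal.ofReal (sh + 1)) with hh'def
    have hh'm : Measurable h' := hh.min measurable_const
    have hfin' : ∀ z, h' z ≠ ⊤ := fun z =>
      ne_top_of_le_ne_top ENNReal.ofReal_ne_top (min_le_right _ _)
    set ψ := fun t : ℝ => volume {z | ENNReal.ofReal t < h' z} with hψdef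
    have hψ : Measurable ψ := Antitone.measurable (fun t s hts =>
      measure_mono fun x hx => lt_of_le_of_lt (ENNReal.ofReal_le_ofReal hts) hx)
    have hstep : ∀ τ ∈ Ioo (0:ℝ) 1, φh (sh * τ) = ψ (sh * τ) := by
      intro τ hτ
      have hsets : {z | ENNReal.ofReal (sh * τ) < h z} = {z | ENNReal.ofReal (sh * τ) < h' z} := by
        ext z
        simp only [mem_setOf_eq, hh'def, lt_min_iff]
        have h2 : ENNReal.ofReal (sh * τ) < ENNReal.ofReal (sh + 1) := by
          rw [ENNReal.ofReal_lt_ofReal_iff (by positivity)]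
          nlinarith [hτ.1, hτ.2]
        tauto
      simp only [hφhdef, hψdef, hsets]
    have e1 : ∫⁻ z, h' z = ENNReal.ofReal sh * ∫⁻ τ in Ioi (0:ℝ), ψ (sh * τ) := by
      rw [lintegral_eq_layer hh'm hfin', cov_Ioi sh hsh ψ hψ]
    have e2 : ah = ∫⁻ τ in Ioo (0:ℝ) 1, ψ (sh * τ) :=
      setLIntegral_congr_fun measurableSet_Ioo hstep
    calc ENNReal.ofReal sh * ah
        = ENNReal.ofReal sh * ∫⁻ τ in Ioo (0:ℝ) 1, ψ (sh * τ) := by rw [e2]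
      _ ≤ ENNReal.ofReal sh * ∫⁻ τ in Ioi (0:ℝ), ψ (sh * τ) := by
          gcongr
          rw [hIoi]; exact subset_union_left
      _ = ∫⁻ z, h' z := e1.symm
      _ ≤ ∫⁻ z, h z := lintegral_mono fun z => min_le_left _ _
  -- key measure inequality
  have key : ∀ τ ∈ Ioo (0:ℝ) 1, φf (sf * τ) + φg (sg * τ) ≤ 2 * φh (sh * τ) := by
    intro τ hτ
    obtain ⟨hτ0, hτ1⟩ := hτ
    apply mid_vol_1d
    · exact measurableSet_lt measurable_const hh
    · -- nonempty A
      have h1 : ENNReal.ofReal (sf * τ) < Sf := by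
        rw [← hOf, ENNReal.ofReal_lt_ofReal_iff hsf]
        nlinarith
      rw [hSf, lt_iSup_iff] at h1
      obtain ⟨x, hx⟩ := h1
      exact ⟨x, hx⟩
    · have h1 : ENNReal.ofReal (sg * τ) < Sg := by
        rw [← hOg, ENNReal.ofReal_lt_ofReal_iff hsg]
        nlinarith
      rw [hSg, lt_iSup_iff] at h1
      obtain ⟨y, hy⟩ := h1
      exact ⟨y, hy⟩
    · exact measurableSet_lt measurable_const hf
    · exact measurableSet_lt measurable_const hg
    · intro x hx y hy
      simp only [mem_setOf_eq] at hx hy ⊢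
      have e1 : (ENNReal.ofReal (sh * τ)) ^ 2 = ENNReal.ofReal (sf * τ) * ENNReal.ofReal (sg * τ) := by
        rw [← ENNReal.ofReal_mul (by positivity), sq, ← ENNReal.ofReal_mul (by positivity)]
        congr 1
        linear_combination (τ * τ) * hsh2
      have h2 : (ENNReal.ofReal (sh * τ)) ^ 2 < f x * g y := by
        rw [e1]; exact ENNReal.mul_lt_mul hx hy
      have h3 : (ENNReal.ofReal (sh * τ)) ^ 2 < (h ((x + y) / 2)) ^ 2 :=
        lt_of_lt_of_le h2 (H x y)
      by_contra hc
      push_neg at hc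
      exact absurd h3 (not_lt.mpr (pow_le_pow_left' hc 2))
  -- integrate key
  have hsum : af + ag ≤ 2 * ah := by
    calc af + ag = ∫⁻ τ in Ioo (0:ℝ) 1, (φf (sf * τ) + φg (sg * τ)) := by
          rw [hafdef, hagdef, lintegral_add_left (by fun_prop)]
      _ ≤ ∫⁻ τ in Ioo (0:ℝ) 1, 2 * φh (sh * τ) :=
          setLIntegral_mono (by fun_prop) key
      _ = 2 * ah := by rw [hahdef, lintegral_const_mul 2 (by fun_prop)]
  -- finish
  have hprod : af * ag ≤ ah ^ 2 := by
    have h4 : 4 * (af * ag) ≤ 4 * ah ^ 2 := by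
      calc 4 * (af * ag) ≤ (af + ag) ^ 2 := four_mul_le_sq af ag
        _ ≤ (2 * ah) ^ 2 := pow_le_pow_left' hsum 2
        _ = 4 * ah ^ 2 := by ring
    exact (ENNReal.mul_le_mul_iff_right (by norm_num) (by norm_num)).mp h4
  calc (∫⁻ x, f x) * ∫⁻ y, g y = ENNReal.ofReal sf * ENNReal.ofReal sg * (af * ag) := by
        rw [hf_eq, hg_eq]; ring
    _ ≤ ENNReal.ofReal sf * ENNReal.ofReal sg * ah ^ 2 := by gcongr
    _ = (ENNReal.ofReal sh * ah) ^ 2 := by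
        rw [← ENNReal.ofReal_mul hsf.le, ← hsh2, ENNReal.ofReal_mul (by positivity)]
        ring
    _ ≤ (∫⁻ z, h z) ^ 2 := pow_le_pow_left' hh_ge 2

lemma pl_dim_one (hf : Measurable f) (hg : Measurable g) (hh : Measurable h)
    (H : ∀ x y, f x * g y ≤ (h ((x + y) / 2)) ^ 2) :
    (∫⁻ x, f x) * ∫⁻ y, g y ≤ (∫⁻ z, h z) ^ 2 := by
  have key : ∀ N M : ℕ, (∫⁻ x, min (f x) (N : ℝ≥0∞)) * (∫⁻ y, min (g y) (M : ℝ≥0∞)) ≤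
      (∫⁻ z, h z) ^ 2 := by
    intro N M
    refine pl_dim_one_bdd (hf.min measurable_const) (hg.min measurable_const) hh N M
      (fun x => by exact_mod_cast min_le_right _ _) (fun y => by exact_mod_cast min_le_right _ _) ?_
    intro x y
    exact le_trans (mul_le_mul' (min_le_left _ _) (min_le_left _ _)) (H x y)
  have hfs : ∫⁻ x, f x = ⨆ N : ℕ, ∫⁻ x, min (f x) (N : ℝ≥0∞) := by
    rw [← lintegral_iSup (fun N => hf.min measurable_const)
      (fun N M hNM x => min_le_min le_rfl (by exact_mod_cast Nat.cast_le.mpr hNM))]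
    congr 1
    funext x
    rw [ennreal_sup_min_nat]
  have hgs : ∫⁻ y, g y = ⨆ M : ℕ, ∫⁻ y, min (g y) (M : ℝ≥0∞) := by
    rw [← lintegral_iSup (fun M => hg.min measurable_const)
      (fun N M hNM y => min_le_min le_rfl (by exact_mod_cast Nat.cast_le.mpr hNM))]
    congr 1
    funext y
    rw [ennreal_sup_min_nat]
  rw [hfs, hgs, ENNReal.iSup_mul]
  refine iSup_le fun N => ?_
  rw [ENNReal.mul_iSup]
  exact iSup_le fun M => key N M

end part2
lemma pl_dim : ∀ (n : ℕ) (f g h : (Fin n → ℝ) → ℝ≥0∞),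
    Measurable f → Measurable g → Measurable h →
    (∀ x y, f x * g y ≤ (h (fun j => (x j + y j) / 2)) ^ 2) →
    (∫⁻ x, f x) * ∫⁻ y, g y ≤ (∫⁻ z, h z) ^ 2 := by
  intro n
  induction n with
  | zero =>
    intro f g h hf hg hh H
    have hu : (volume : Measure (Fin 0 → ℝ)) univ = 1 := by
      rw [MeasureTheory.volume_pi, Measure.pi_univ]
      simp
    rw [lintegral_unique f, lintegral_unique g, lintegral_unique h, hu, mul_one, mul_one, mul_one]
    have hkey := H default default
    have hd : (fun j : Fin 0 => ((default : Fin 0 → ℝ) j + (default : Fin 0 → ℝ) j) / 2)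
        = (default : Fin 0 → ℝ) := by
      funext j
      exact j.elim0
    convert hkey using 3 <;> exact Subsingleton.elim _ _
  | succ n ih =>
    intro f g h hf hg hh H
    set e := MeasurableEquiv.piFinSuccAbove (fun _ : Fin (n+1) => ℝ) 0 with hedef
    have he : MeasurePreserving (⇑e) volume volume :=
      volume_preserving_piFinSuccAbove (fun _ : Fin (n+1) => ℝ) 0
    have hesymm : ∀ (t : ℝ) (x : Fin n → ℝ), e.symm (t, x) = Fin.cons t x := by
      intro t x
      rw [hedef, MeasurableEquiv.piFinSuccAbove_symm_apply]
      simp [Fin.insertNthEquiv_zero]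
      rfl
    have hconst : ∀ t : ℝ, Measurable (fun x : Fin n → ℝ => (Fin.cons t x : Fin (n+1) → ℝ)) := by
      intro t
      apply measurable_pi_lambda
      intro j
      refine Fin.cases ?_ ?_ j
      · simp only [Fin.cons_zero]; exact measurable_const
      · intro i; simp only [Fin.cons_succ]; exact measurable_pi_apply i
    have hcons : Measurable (fun p : ℝ × (Fin n → ℝ) => (Fin.cons p.1 p.2 : Fin (n+1) → ℝ)) := by
      apply measurable_pi_lambda
      intro j
      refine Fin.cases ?_ ?_ j
      · simp only [Fin.cons_zero]; exact measurable_fst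
      · intro i; simp only [Fin.cons_succ]
        exact (measurable_pi_apply i).comp measurable_snd
    have hrep : ∀ (k : (Fin (n+1) → ℝ) → ℝ≥0∞), Measurable k →
        ∫⁻ z, k z = ∫⁻ t : ℝ, ∫⁻ x : Fin n → ℝ, k (Fin.cons t x) := by
      intro k hk
      rw [← (he.symm e).lintegral_comp hk]
      have h2 : ∫⁻ p, k (e.symm p) ∂((volume : Measure ℝ).prod volume)
          = ∫⁻ t : ℝ, ∫⁻ x : Fin n → ℝ, k (e.symm (t, x)) :=
        lintegral_prod _ ((hk.comp e.symm.measurable).aemeasurable)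
      rw [show (volume : Measure (ℝ × (Fin n → ℝ))) = (volume : Measure ℝ).prod volume from rfl, h2]
      congr 1
      funext t
      congr 1
      funext x
      rw [hesymm]
    set F := fun t : ℝ => ∫⁻ x : Fin n → ℝ, f (Fin.cons t x) with hFdef
    set G := fun t : ℝ => ∫⁻ x : Fin n → ℝ, g (Fin.cons t x) with hGdef
    set H' := fun t : ℝ => ∫⁻ x : Fin n → ℝ, h (Fin.cons t x) with hH'def
    have hFm : Measurable F :=
      Measurable.lintegral_prod_right (f := fun t x => f (Fin.cons t x)) (hf.comp hcons)
    have hGm : Measurable G :=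
      Measurable.lintegral_prod_right (f := fun t x => g (Fin.cons t x)) (hg.comp hcons)
    have hH'm : Measurable H' :=
      Measurable.lintegral_prod_right (f := fun t x => h (Fin.cons t x)) (hh.comp hcons)
    have hkey : ∀ t s : ℝ, F t * G s ≤ (H' ((t + s) / 2)) ^ 2 := by
      intro t s
      apply ih (fun x => f (Fin.cons t x)) (fun y => g (Fin.cons s y))
        (fun z => h (Fin.cons ((t + s) / 2) z))
        (hf.comp (hconst t)) (hg.comp (hconst s)) (hh.comp (hconst _))
      intro x y
      have h1 := H (Fin.cons t x) (Fin.cons s y)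
      have hmid : (fun j : Fin (n+1) => (Fin.cons t x j + Fin.cons s y j) / 2)
          = (Fin.cons ((t + s) / 2) (fun j => (x j + y j) / 2) : Fin (n+1) → ℝ) := by
        funext j
        refine Fin.cases ?_ ?_ j
        · simp
        · intro i; simp
      rwa [hmid] at h1
    rw [hrep f hf, hrep g hg, hrep h hh]
    exact pl_dim_one hFm hGm hH'm hkey

lemma bm_pi (n : ℕ) {A C S : Set (Fin n → ℝ)} (hA : MeasurableSet A) (hC : MeasurableSet C)
    (hS : MeasurableSet S)
    (hmid : ∀ x ∈ A, ∀ y ∈ C, (fun j => (x j + y j) / 2) ∈ S) :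
    volume A * volume C ≤ volume S ^ 2 := by
  have hkey := pl_dim n (A.indicator 1) (C.indicator 1) (S.indicator 1)
    (measurable_one.indicator hA) (measurable_one.indicator hC) (measurable_one.indicator hS) ?_
  · rwa [lintegral_indicator_one hA, lintegral_indicator_one hC, lintegral_indicator_one hS]
      at hkey
  intro x y
  by_cases hx : x ∈ A
  · by_cases hy : y ∈ C
    · have hm := hmid x hx y hy
      simp [indicator_of_mem, hx, hy, hm]
    · simp [indicator_of_notMem hy]
  · simp [indicator_of_notMem hx]

lemma bm_euclid (d : ℕ) {A C S : Set (EuclideanSpace ℝ (Fin d))}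
    (hA : MeasurableSet A) (hC : MeasurableSet C) (hS : MeasurableSet S)
    (hmid : ∀ x ∈ A, ∀ y ∈ C, (2⁻¹ : ℝ) • (x + y) ∈ S) :
    volume A * volume C ≤ volume S ^ 2 := by
  set e := (MeasurableEquiv.toLp 2 (Fin d → ℝ)).symm with hedef
  have he : MeasurePreserving (⇑e) volume volume :=
    EuclideanSpace.volume_preserving_symm_measurableEquiv_toLp (Fin d)
  have hes : MeasurePreserving (⇑e.symm) volume volume := he.symm e
  have hvol : ∀ (T : Set (EuclideanSpace ℝ (Fin d))), MeasurableSet T →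
      volume (⇑e.symm ⁻¹' T) = volume T := by
    intro T hT
    rw [hes.measure_preimage hT.nullMeasurableSet]
  have hcoord : ∀ (x y : Fin d → ℝ),
      e.symm (fun j => (x j + y j) / 2) = (2⁻¹ : ℝ) • (e.symm x + e.symm y) := by
    intro x y
    have : ∀ j, ((2⁻¹ : ℝ) • (e.symm x + e.symm y) : EuclideanSpace ℝ (Fin d)) j
        = (x j + y j) / 2 := by
      intro j
      simp [hedef]
      ring
    ext j
    rw [this j]
    rfl
  rw [← hvol A hA, ← hvol C hC, ← hvol S hS]
  apply bm_pi d (hA.preimage e.symm.measurable) (hC.preimage e.symm.measurable)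
    (hS.preimage e.symm.measurable)
  intro x hx y hy
  simp only [mem_preimage] at hx hy ⊢
  rw [hcoord]
  exact hmid _ hx _ hy
theorem stmt_3 (d : ℕ) (hd : 1 ≤ d)
    (ν : Measure (EuclideanSpace ℝ (Fin d)))
    (hν : ν = (volume (Metric.closedBall (0 : EuclideanSpace ℝ (Fin d)) 1))⁻¹ •
      volume.restrict (Metric.closedBall (0 : EuclideanSpace ℝ (Fin d)) 1))
    (B : Set (EuclideanSpace ℝ (Fin d))) (hB : MeasurableSet B)
    (hBsub : B ⊆ Metric.closedBall (0 : EuclideanSpace ℝ (Fin d)) 1)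
    (hhalf : (1 : ℝ≥0∞) / 2 ≤ ν B)
    (ε : ℝ) (hε : 0 < ε) (hε2 : ε ≤ 2) :
    1 - (1 / (ν B).toReal) *
        Real.exp (-(2 * d) * ((2 - Real.sqrt 3) / 3) * ε ^ 2) ≤
      (ν (Metric.thickening ε B)).toReal := by
  set ball1 : Set (EuclideanSpace ℝ (Fin d)) := Metric.closedBall 0 1 with hball
  set V := volume ball1 with hVdef
  have hV0 : V ≠ 0 := by
    have h1 : (0:ℝ≥0∞) < volume (Metric.ball (0 : EuclideanSpace ℝ (Fin d)) 1) := measure_ball_pos _ _ one_pos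
    exact ne_of_gt (lt_of_lt_of_le h1 (measure_mono Metric.ball_subset_closedBall))
  have hVtop : V ≠ ⊤ := measure_closedBall_lt_top.ne
  have hν_apply : ∀ T : Set (EuclideanSpace ℝ (Fin d)), MeasurableSet T → ν T = V⁻¹ * volume (T ∩ ball1) := by
    intro T hT
    rw [hν]
    simp only [Measure.smul_apply, Measure.restrict_apply hT, smul_eq_mul]
  have hνB : ν B = V⁻¹ * volume B := by
    rw [hν_apply B hB, inter_eq_self_of_subset_left hBsub]
  have hν_univ : ν univ = 1 := by
    rw [hν_apply _ MeasurableSet.univ, univ_inter, ← hVdef, ENNReal.inv_mul_cancel hV0 hVtop]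
  have hνB_le : ν B ≤ 1 := hν_univ ▸ measure_mono (subset_univ B)
  have hνB_top : ν B ≠ ⊤ := ne_top_of_le_ne_top ENNReal.one_ne_top hνB_le
  set C : Set (EuclideanSpace ℝ (Fin d)) := ball1 \ Metric.thickening ε B with hCdef
  have hCm : MeasurableSet C :=
    measurableSet_closedBall.diff Metric.isOpen_thickening.measurableSet
  have hνC : ν C = V⁻¹ * volume C := by
    rw [hν_apply C hCm, inter_eq_self_of_subset_left diff_subset]
  have hνC_le : ν C ≤ 1 := hν_univ ▸ measure_mono (subset_univ C)
  have hνC_top : ν C ≠ ⊤ := ne_top_of_le_ne_top ENNReal.one_ne_top hνC_le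
  have hνT_le : ν (Metric.thickening ε B) ≤ 1 := hν_univ ▸ measure_mono (subset_univ _)
  have hνT_top : ν (Metric.thickening ε B) ≠ ⊤ := ne_top_of_le_ne_top ENNReal.one_ne_top hνT_le
  set u : ℝ := 1 - ε^2/4 with hu
  have hu0 : 0 ≤ u := by rw [hu]; nlinarith
  set ρ := Real.sqrt u with hρ
  have hρ0 : 0 ≤ ρ := Real.sqrt_nonneg _
  have hmid : ∀ x ∈ B, ∀ y ∈ C, (2⁻¹ : ℝ) • (x + y) ∈ Metric.closedBall (0 : EuclideanSpace ℝ (Fin d)) ρ := by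
    intro x hx y hy
    have hxn : ‖x‖ ≤ 1 := mem_closedBall_zero_iff.mp (hBsub hx)
    have hyn : ‖y‖ ≤ 1 := mem_closedBall_zero_iff.mp hy.1
    have hdist : ε ≤ dist y x := by
      by_contra hlt
      push_neg at hlt
      exact hy.2 (Metric.mem_thickening_iff.mpr ⟨x, hx, hlt⟩)
    have hxy : ε ≤ ‖x - y‖ := by
      rwa [norm_sub_rev, ← dist_eq_norm]
    have hpar := parallelogram_law_with_norm ℝ x y
    rw [mem_closedBall_zero_iff]
    have hnorm : ‖(2⁻¹:ℝ) • (x + y)‖ = 2⁻¹ * ‖x + y‖ := by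
      rw [norm_smul, Real.norm_eq_abs, abs_of_pos (by norm_num : (0:ℝ) < 2⁻¹)]
    rw [hnorm, hρ]
    apply (Real.le_sqrt (by positivity) hu0).mpr
    have h1 : ε * ε ≤ ‖x - y‖ * ‖x - y‖ := mul_self_le_mul_self hε.le hxy
    have h2 : ‖x + y‖ * ‖x + y‖ ≤ 4 - ε * ε := by nlinarith [norm_nonneg x, norm_nonneg y]
    rw [hu]
    nlinarith [norm_nonneg (x + y)]
  have hbm : volume B * volume C ≤ volume (Metric.closedBall (0 : EuclideanSpace ℝ (Fin d)) ρ) ^ 2 :=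
    bm_euclid d hB hCm measurableSet_closedBall hmid
  have hball_vol : volume (Metric.closedBall (0 : EuclideanSpace ℝ (Fin d)) ρ) = ENNReal.ofReal (ρ^d) * V := by
    rw [Measure.addHaar_closedBall' volume 0 hρ0, finrank_euclideanSpace_fin]
  have hsq : (ENNReal.ofReal (ρ^d))^2 = ENNReal.ofReal (u^d) := by
    rw [← ENNReal.ofReal_pow (by positivity)]
    congr 1
    rw [← pow_mul, mul_comm d 2, pow_mul, Real.sq_sqrt hu0]
  have hprod : ν B * ν C ≤ ENNReal.ofReal (u^d) := by
    have hbm' : volume B * volume C ≤ (ENNReal.ofReal (ρ^d) * V)^2 := by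
      rw [← hball_vol]; exact hbm
    calc ν B * ν C = V⁻¹ * V⁻¹ * (volume B * volume C) := by rw [hνB, hνC]; ring
      _ ≤ V⁻¹ * V⁻¹ * (ENNReal.ofReal (ρ^d) * V)^2 := by gcongr
      _ = (ENNReal.ofReal (ρ^d))^2 * ((V⁻¹ * V) * (V⁻¹ * V)) := by ring
      _ = ENNReal.ofReal (u^d) := by
          rw [ENNReal.inv_mul_cancel hV0 hVtop, hsq]; ring
  have hcover : (1:ℝ≥0∞) ≤ ν (Metric.thickening ε B) + ν C := by
    have hsub2 : ball1 ⊆ (Metric.thickening ε B) ∪ C := by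
      intro z hz
      by_cases hzt : z ∈ Metric.thickening ε B
      · exact Or.inl hzt
      · exact Or.inr ⟨hz, hzt⟩
    have hb1 : ν ball1 = 1 := by
      rw [hν_apply _ measurableSet_closedBall, inter_self, ← hVdef,
        ENNReal.inv_mul_cancel hV0 hVtop]
    rw [← hb1]
    exact le_trans (measure_mono hsub2) (measure_union_le _ _)
  set p := (ν B).toReal with hpdef
  set c := (ν C).toReal with hcdef
  set q := (ν (Metric.thickening ε B)).toReal with hqdef
  have hp_half : 1/2 ≤ p := by
    have h1 := ENNReal.toReal_mono hνB_top hhalf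
    simpa using h1
  have hp_pos : 0 < p := lt_of_lt_of_le (by norm_num) hp_half
  have hpc : p * c ≤ u^d := by
    have h1 : (ν B * ν C).toReal ≤ (ENNReal.ofReal (u^d)).toReal :=
      ENNReal.toReal_mono ENNReal.ofReal_ne_top hprod
    rwa [ENNReal.toReal_mul, ENNReal.toReal_ofReal (by positivity)] at h1
  have hcover' : 1 ≤ q + c := by
    have h1 := ENNReal.toReal_mono (ENNReal.add_ne_top.mpr ⟨hνT_top, hνC_top⟩) hcover
    rwa [ENNReal.toReal_one, ENNReal.toReal_add hνT_top hνC_top] at h1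
  have hud : u^d ≤ Real.exp (-(2 * d) * ((2 - Real.sqrt 3) / 3) * ε ^ 2) := by
    set k : ℝ := 8 * (2 - Real.sqrt 3) / 3 with hk
    have hk1 : k ≤ 1 := by
      have h58 : (13:ℝ)/8 ≤ Real.sqrt 3 :=
        (Real.le_sqrt (by norm_num) (by norm_num)).mpr (by norm_num)
      rw [hk, div_le_one (by norm_num)]
      linarith
    have hbase : u ≤ Real.exp (-(k * (ε^2/4))) := by
      have h1 := Real.add_one_le_exp (-(k * (ε^2/4)))
      have huk : u ≤ 1 - k * (ε^2/4) := by nlinarith [sq_nonneg ε]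
      linarith
    calc u^d ≤ (Real.exp (-(k * (ε^2/4))))^d := pow_le_pow_left₀ hu0 hbase d
      _ = Real.exp ((d:ℝ) * (-(k * (ε^2/4)))) := by rw [Real.exp_nat_mul]
      _ = Real.exp (-(2 * d) * ((2 - Real.sqrt 3) / 3) * ε ^ 2) := by
          congr 1
          rw [hk]
          ring
  have hc_le : c ≤ (1/p) * Real.exp (-(2 * d) * ((2 - Real.sqrt 3) / 3) * ε ^ 2) := by
    have h1 : p * c ≤ Real.exp (-(2 * d) * ((2 - Real.sqrt 3) / 3) * ε ^ 2) :=
      le_trans hpc hud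
    have hc0 : 0 ≤ c := ENNReal.toReal_nonneg
    rw [one_div, ← div_eq_inv_mul, le_div_iff₀ hp_pos]
    nlinarith [h1]
  linarith
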